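/- The conjugation action of SL₂(ℝ) preserves each component of the punctured cone {x² + yz = 0} ∖ {0}. Precisely: let A ∈ SL₂(ℝ) and let M be a nonzero 2×2 real matrix with Tr(M) = 0 and det(M) = 0. If the (1,2)-entry of M is strictly less than its (2,1)-entry, then the (1,2)-entry of A·M·A⁻¹ is strictly less than its (2,1)-entry. -/
import Mathlib


lemma key (a b c d x y z : ℝ) (hA : a*d - b*c = 1) (hx : x^2 + y*z = 0)
    (h : y < z) :
    a^2*y - b^2*z - 2*a*b*x < d^2*z - c^2*y + 2*c*d*x := by
  obtain ⟨S, hSdef⟩ : ∃ S : ℝ, S = a^2 + c^2 := ⟨_, rfl⟩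
  obtain ⟨T, hTdef⟩ : ∃ T : ℝ, T = b^2 + d^2 := ⟨_, rfl⟩
  obtain ⟨u, hudef⟩ : ∃ u : ℝ, u = a*b + c*d := ⟨_, rfl⟩
  have hS : 0 < S := by
    rcases eq_or_ne a 0 with ha | ha
    · have hc : c ≠ 0 := by rintro rfl; rw [ha] at hA; nlinarith
      rw [hSdef]; positivity
    · rw [hSdef]; positivity
  have hT : 0 < T := by
    rcases eq_or_ne b 0 with hb | hb
    · have hd : d ≠ 0 := by rintro rfl; rw [hb] at hA; nlinarith
      rw [hTdef]; positivity
    · rw [hTdef]; positivity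
  have hy : y ≤ 0 := by nlinarith [sq_nonneg x]
  have hz : 0 ≤ z := by nlinarith [sq_nonneg x]
  have hu : u^2 = S*T - 1 := by
    rw [hSdef, hTdef, hudef]; nlinarith [hA]
  have hid : (T*z - S*y)^2 - (2*u*x)^2 = (T*z + S*y)^2 + 4*x^2 := by
    linear_combination (-4*x^2) * hu + (-4*S*T) * hx
  have hQ : 0 ≤ T*z - S*y := by
    nlinarith [mul_nonneg hT.le hz, mul_nonneg hS.le (neg_nonneg.2 hy)]
  have hlink : d^2*z - c^2*y + 2*c*d*x - (a^2*y - b^2*z - 2*a*b*x)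
      = T*z - S*y + 2*u*x := by rw [hSdef, hTdef, hudef]; ring
  by_contra hE0
  push_neg at hE0
  have hE : T*z - S*y + 2*u*x ≤ 0 := by linarith [hlink, hE0]
  have ha1 : 0 ≤ T*z - S*y - 2*u*x := by linarith
  have h1 : 0 ≤ (T*z - S*y - 2*u*x) * (-(T*z - S*y + 2*u*x)) :=
    mul_nonneg ha1 (neg_nonneg.2 hE)
  have h1' : (T*z - S*y)^2 - (2*u*x)^2 ≤ 0 := by nlinarith [h1]
  have h2 : (T*z + S*y)^2 + 4*x^2 ≤ 0 := by linarith [hid, h1']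
  have hx2 : x^2 = 0 :=
    le_antisymm (by linarith [sq_nonneg (T*z + S*y)]) (sq_nonneg x)
  have hx0 : x = 0 := by
    exact pow_eq_zero_iff (n := 2) (by norm_num) |>.mp hx2
  have hTS2 : (T*z + S*y)^2 = 0 :=
    le_antisymm (by linarith [sq_nonneg x]) (sq_nonneg _)
  have hTS : T*z + S*y = 0 := by
    exact pow_eq_zero_iff (n := 2) (by norm_num) |>.mp hTS2
  rw [hx0] at hE
  have hSy : 0 ≤ S * y := by linarith [hE, hTS]
  have hSy' : S * y ≤ 0 := mul_nonpos_of_nonneg_of_nonpos hS.le hy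
  have hy0 : y = 0 := by
    rcases mul_eq_zero.mp (le_antisymm hSy' hSy) with h' | h'
    · exact absurd h' hS.ne'
    · exact h'
  have hz0 : z = 0 := by
    rw [hy0] at hTS; simp at hTS
    exact hTS.resolve_left hT.ne'
  rw [hy0, hz0] at h; exact lt_irrefl 0 h

/-- **Conjugation preserves each component of the punctured cone.**
Let `A ∈ SL₂(ℝ)` and let `M ≠ 0` be a real `2 × 2` matrix with zero trace and
zero determinant.  If the `(1,2)`-entry of `M` is strictly less than its
`(2,1)`-entry, then the same holds for `A M A⁻¹`. -/
theorem conjugation_preserves_cone_component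
    (A : Matrix.SpecialLinearGroup (Fin 2) ℝ) (M : Matrix (Fin 2) (Fin 2) ℝ)
    (hM : M ≠ 0) (htr : M.trace = 0) (hdet : M.det = 0)
    (h : M 0 1 < M 1 0) :
    (A.val * M * (A⁻¹).val) 0 1 < (A.val * M * (A⁻¹).val) 1 0 := by
  have hA : A.val 0 0 * A.val 1 1 - A.val 0 1 * A.val 1 0 = 1 := by
    have := A.prop
    rwa [Matrix.det_fin_two] at this
  have h11 : M 1 1 = -(M 0 0) := by
    rw [Matrix.trace_fin_two] at htr; linarith
  have hx : (M 0 0)^2 + M 0 1 * M 1 0 = 0 := by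
    rw [Matrix.det_fin_two, h11] at hdet; nlinarith [hdet]
  have hinv : (A⁻¹).val = A.val.adjugate := by
    rw [Matrix.SpecialLinearGroup.coe_inv]
  have e1 : (A.val * M * (A⁻¹).val) 0 1 =
      (A.val 0 0)^2 * M 0 1 - (A.val 0 1)^2 * M 1 0
        - 2 * A.val 0 0 * A.val 0 1 * M 0 0 := by
    rw [hinv]
    simp [Matrix.mul_apply, Fin.sum_univ_two, Matrix.adjugate_fin_two, h11]
    ring
  have e2 : (A.val * M * (A⁻¹).val) 1 0 =
      (A.val 1 1)^2 * M 1 0 - (A.val 1 0)^2 * M 0 1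
        + 2 * A.val 1 0 * A.val 1 1 * M 0 0 := by
    rw [hinv]
    simp [Matrix.mul_apply, Fin.sum_univ_two, Matrix.adjugate_fin_two, h11]
    ring
  rw [e1, e2]
  exact key (A.val 0 0) (A.val 0 1) (A.val 1 0) (A.val 1 1) (M 0 0) (M 0 1)
    (M 1 0) hA hx h
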